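/- Within a run of the PBWT, forward stepping preserves offsets: if [p,q] is an interval of rows with PBWT_j[p] = PBWT_j[p+1] = ⋯ = PBWT_j[q], then for every p ≤ i ≤ q, fore[i][j] = fore[p][j] + (i − p). -/

import Mathlib

namespace PBWT

/-- The reversed prefix of length `j` (truncated at `w`) of haplotype `i`:
used to express the co-lexicographic order of prefixes. -/
def revPrefix {h w : ℕ} (S : Fin h → Fin w → ℕ) (j : ℕ) (i : Fin h) : List ℕ :=
  ((List.range j).filterMap (fun t => if ht : t < w then some (S i ⟨t, ht⟩) else none)).reverse

/-- `PA` is the stable sort of the haplotype indices by the co-lexicographic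
order of their prefixes of length `j` (ties broken by original index). -/
def IsStableSort {h w : ℕ} (S : Fin h → Fin w → ℕ) (j : ℕ) (PA : Fin h ≃ Fin h) : Prop :=
  ∀ a b : Fin h, a < b →
    List.Lex (· < ·) (revPrefix S j (PA a)) (revPrefix S j (PA b)) ∨
      (revPrefix S j (PA a) = revPrefix S j (PA b) ∧ (PA a).val < (PA b).val)

/-- Number of maximal runs of equal adjacent values in the sequence `f`. -/
def runCount {α : Type*} [DecidableEq α] {n : ℕ} (f : Fin n → α) : ℕ :=
  ((List.ofFn f).destutter (· ≠ ·)).length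

/-- `h''`: the number of indices `i` with `S i ≠ S (i+1)`. -/
noncomputable def adjDiff {h w : ℕ} (S : Fin h → Fin w → ℕ) : ℕ :=
  Nat.card {i : Fin h // ∃ h1 : (i : ℕ) + 1 < h, S i ≠ S ⟨(i : ℕ) + 1, h1⟩}

/-- The strict "stable sort" order key comparison. -/
def KeyLt {h w : ℕ} (S : Fin h → Fin w → ℕ) (j : ℕ) (x y : Fin h) : Prop :=
  List.Lex (· < ·) (revPrefix S j x) (revPrefix S j y) ∨
    (revPrefix S j x = revPrefix S j y ∧ x.val < y.val)

lemma lex_asymm {l m : List ℕ} (h1 : List.Lex (· < ·) l m) (h2 : List.Lex (· < ·) m l) :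
    False := by
  exact (List.Lex.asymm (· < ·)).asymm l m h1 h2

lemma keyLt_asymm {h w : ℕ} {S : Fin h → Fin w → ℕ} {j : ℕ} {x y : Fin h}
    (h1 : KeyLt S j x y) (h2 : KeyLt S j y x) : False := by
  rcases h1 with h1 | ⟨e1, l1⟩ <;> rcases h2 with h2 | ⟨e2, l2⟩
  · exact lex_asymm h1 h2
  · rw [e2] at h1; exact lex_asymm h1 h1
  · rw [e1] at h2; exact lex_asymm h2 h2
  · omega

lemma keyLt_irrefl {h w : ℕ} {S : Fin h → Fin w → ℕ} {j : ℕ} {x : Fin h}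
    (h1 : KeyLt S j x x) : False := keyLt_asymm h1 h1

lemma stable_iff {h w : ℕ} {S : Fin h → Fin w → ℕ} {j : ℕ} {PA : Fin h ≃ Fin h}
    (hPA : IsStableSort S j PA) (x y : Fin h) :
    KeyLt S j x y ↔ PA.symm x < PA.symm y := by
  constructor
  · intro hk
    rcases lt_trichotomy (PA.symm x) (PA.symm y) with hlt | heq | hgt
    · exact hlt
    · exact absurd hk (by rw [PA.symm.injective heq] at hk ⊢; exact fun _ => keyLt_irrefl hk)
    · have := hPA _ _ hgt
      simp only [Equiv.apply_symm_apply] at this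
      exact absurd this (fun h2 => (keyLt_asymm hk h2))
  · intro hlt
    have := hPA _ _ hlt
    simpa only [Equiv.apply_symm_apply, KeyLt] using this

lemma revPrefix_succ {h w : ℕ} (S : Fin h → Fin w → ℕ) {j : ℕ} (hj : j < w) (x : Fin h) :
    revPrefix S (j + 1) x = S x ⟨j, hj⟩ :: revPrefix S j x := by
  simp [revPrefix, List.range_succ, List.filterMap_append, hj]

lemma lex_head_le {a b : ℕ} {l m : List ℕ}
    (hk : List.Lex (· < ·) (a :: l) (b :: m)) : a ≤ b := by
  generalize hl : (a :: l) = L at hk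
  generalize hm : (b :: m) = M at hk
  induction hk with
  | nil => simp at hl
  | rel h => rw [List.cons.injEq] at hl hm; omega
  | cons h _ => rw [List.cons.injEq] at hl hm; omega

lemma keyLt_head_le {h w : ℕ} {S : Fin h → Fin w → ℕ} {j : ℕ} (hj : j < w) {x y : Fin h}
    (hk : KeyLt S (j + 1) x y) : S x ⟨j, hj⟩ ≤ S y ⟨j, hj⟩ := by
  rcases hk with hk | ⟨e, _⟩
  · rw [revPrefix_succ S hj, revPrefix_succ S hj] at hk
    exact lex_head_le hk
  · rw [revPrefix_succ S hj, revPrefix_succ S hj] at e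
    exact le_of_eq (List.head_eq_of_cons_eq e)

lemma keyLt_succ_iff {h w : ℕ} {S : Fin h → Fin w → ℕ} {j : ℕ} (hj : j < w) {x y : Fin h}
    (hxy : S x ⟨j, hj⟩ = S y ⟨j, hj⟩) : KeyLt S (j + 1) x y ↔ KeyLt S j x y := by
  unfold KeyLt
  rw [revPrefix_succ S hj, revPrefix_succ S hj, hxy, List.lex_cons_iff, List.cons_eq_cons]
  tauto

theorem stmt15 (h w : ℕ) (S : Fin h → Fin w → ℕ) (j : ℕ) (hj : j < w)
    (PA1 PA2 : Fin h ≃ Fin h)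
    (hPA1 : IsStableSort S j PA1) (hPA2 : IsStableSort S (j + 1) PA2)
    (p q : Fin h) (hpq : p ≤ q)
    (hconst : ∀ t : Fin h, p ≤ t → t ≤ q → S (PA1 t) ⟨j, hj⟩ = S (PA1 p) ⟨j, hj⟩) :
    ∀ i : Fin h, p ≤ i → i ≤ q →
      (PA2.symm (PA1 i)).val = (PA2.symm (PA1 p)).val + ((i : ℕ) - (p : ℕ)) := by
  -- the adjacent step
  have step : ∀ t t' : Fin h, p ≤ t → t' ≤ q → (t' : ℕ) = (t : ℕ) + 1 →
      (PA2.symm (PA1 t')).val = (PA2.symm (PA1 t)).val + 1 := by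
    intro t t' hpt ht'q hsucc
    have htt' : t < t' := by simp [Fin.lt_def, hsucc]
    have hpt' : p ≤ t' := le_trans hpt (le_of_lt htt')
    have htq : t ≤ q := le_trans (le_of_lt htt') ht'q
    have hc : S (PA1 t) ⟨j, hj⟩ = S (PA1 t') ⟨j, hj⟩ := by
      rw [hconst t hpt htq, hconst t' hpt' ht'q]
    -- fore t < fore t'
    have hk1 : KeyLt S j (PA1 t) (PA1 t') := (stable_iff hPA1 _ _).mpr (by simpa using htt')
    have hk2 : KeyLt S (j + 1) (PA1 t) (PA1 t') := (keyLt_succ_iff hj hc).mpr hk1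
    have hfor : PA2.symm (PA1 t) < PA2.symm (PA1 t') := (stable_iff hPA2 _ _).mp hk2
    by_contra hne
    -- then there is a strictly intermediate index m
    have hm : ((PA2.symm (PA1 t)).val + 1 : ℕ) < (PA2.symm (PA1 t')).val := by
      have := Fin.lt_def.mp hfor; omega
    set m : Fin h := ⟨(PA2.symm (PA1 t)).val + 1, lt_trans hm (PA2.symm (PA1 t')).isLt⟩ with hmdef
    set y : Fin h := PA2 m with hydef
    have hky1 : KeyLt S (j + 1) (PA1 t) y := by
      rw [stable_iff hPA2, hydef, Equiv.symm_apply_apply]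
      exact Fin.lt_def.mpr (by simp [hmdef])
    have hky2 : KeyLt S (j + 1) y (PA1 t') := by
      rw [stable_iff hPA2, hydef, Equiv.symm_apply_apply]
      exact Fin.lt_def.mpr (by simpa [hmdef] using hm)
    -- sandwich: y has the same j-th character
    have hyc : S y ⟨j, hj⟩ = S (PA1 t) ⟨j, hj⟩ := by
      have h1 := keyLt_head_le hj hky1
      have h2 := keyLt_head_le hj hky2
      rw [← hc] at h2
      omega
    -- hence y's position under PA1 is strictly between t and t' = t+1
    have hy1 : KeyLt S j (PA1 t) y := (keyLt_succ_iff hj hyc.symm).mp hky1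
    have hy2 : KeyLt S j y (PA1 t') := (keyLt_succ_iff hj (by rw [hyc, hc])).mp hky2
    have hb1 : t < PA1.symm y := by
      have := (stable_iff hPA1 _ _).mp hy1; simpa using this
    have hb2 : PA1.symm y < t' := by
      have := (stable_iff hPA1 _ _).mp hy2; simpa using this
    have := Fin.lt_def.mp hb1
    have := Fin.lt_def.mp hb2
    omega
  -- induction on the offset
  have main : ∀ k : ℕ, ∀ i : Fin h, p ≤ i → i ≤ q → (i : ℕ) = (p : ℕ) + k →
      (PA2.symm (PA1 i)).val = (PA2.symm (PA1 p)).val + k := by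
    intro k
    induction k with
    | zero =>
      intro i _ _ hik
      have : i = p := Fin.ext (by omega)
      subst this; simp
    | succ n ih =>
      intro i hpi hiq hik
      have hn : (p : ℕ) + n < h := by have := i.isLt; omega
      set t : Fin h := ⟨(p : ℕ) + n, hn⟩ with htdef
      have htq : t ≤ q := by
        have := Fin.le_def.mp hiq
        exact Fin.le_def.mpr (by simp [htdef]; omega)
      have ht := ih t (Fin.le_def.mpr (by simp [htdef])) htq (by simp [htdef])
      have hs := step t i (Fin.le_def.mpr (by simp [htdef])) hiq (by simp [htdef]; omega)
      omega
  intro i hpi hiq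
  have hle := Fin.le_def.mp hpi
  have := main ((i : ℕ) - (p : ℕ)) i hpi hiq (by omega)
  omega

end PBWT
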